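/- Every simple finite-dimensional weight module over Ū is isomorphic to exactly one module from the list: V_α with α ∈ (ℂ∖ℤ) ∪ rℤ, or S_n^{lr} with l ∈ ℤ and 0 ≤ n ≤ r−2. -/

import Mathlib

noncomputable section

open scoped TensorProduct

namespace Unrolled

/-- `q^z = exp(π √-1 z / r)`. -/
def qc (r : ℕ) (z : ℂ) : ℂ := Complex.exp (Real.pi * Complex.I * z / r)

/-- `{z} = q^z - q^{-z}`. -/
def qbrk (r : ℕ) (z : ℂ) : ℂ := qc r z - qc r (-z)

/-- `[z] = {z}/{1}`. -/
def qint (r : ℕ) (z : ℂ) : ℂ := qbrk r z / qbrk r 1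

/-- `{n}! = ∏_{i=1}^n {i}`. -/
def qbrkFact (r n : ℕ) : ℂ := ∏ i ∈ Finset.range n, qbrk r ((i : ℂ) + 1)

/-- `[n]! = ∏_{i=1}^n [i]`. -/
def qintFact (r n : ℕ) : ℂ := ∏ i ∈ Finset.range n, qint r ((i : ℂ) + 1)

/-- The data of five operators `K, K⁻¹, H, E, F` on a complex vector space. -/
structure Ops (V : Type) [AddCommGroup V] [Module ℂ V] where
  K : Module.End ℂ V
  Kinv : Module.End ℂ V
  H : Module.End ℂ V
  E : Module.End ℂ V
  F : Module.End ℂ V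

/-- A module over the restricted unrolled quantum group `Ū = Ū_q^H(sl₂(ℂ))`:
five operators satisfying the defining relations of `Ū`. -/
structure Rep (r : ℕ) (V : Type) [AddCommGroup V] [Module ℂ V] extends Ops V where
  rel_KKinv : K * Kinv = 1
  rel_KinvK : Kinv * K = 1
  rel_HK : H * K = K * H
  rel_HE : H * E - E * H = (2 : ℂ) • E
  rel_HF : H * F - F * H = (-2 : ℂ) • F
  rel_KE : K * E = qc r 2 • (E * K)
  rel_KF : K * F = qc r (-2) • (F * K)
  rel_EF : E * F - F * E = (qbrk r 1)⁻¹ • (K - Kinv)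
  rel_Er : E ^ r = 0
  rel_Fr : F ^ r = 0

variable {V W U : Type} [AddCommGroup V] [Module ℂ V] [AddCommGroup W] [Module ℂ W]
  [AddCommGroup U] [Module ℂ U]

/-- A `Ū`-submodule: a subspace invariant under the five operators. -/
def Ops.Invariant (A : Ops V) (p : Submodule ℂ V) : Prop :=
  (∀ v ∈ p, A.K v ∈ p) ∧ (∀ v ∈ p, A.Kinv v ∈ p) ∧ (∀ v ∈ p, A.H v ∈ p) ∧
    (∀ v ∈ p, A.E v ∈ p) ∧ (∀ v ∈ p, A.F v ∈ p)

/-- A simple `Ū`-module: nonzero, with no nonzero proper invariant subspace. -/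
def Ops.IsSimple (A : Ops V) : Prop :=
  (∃ v : V, v ≠ 0) ∧ ∀ p : Submodule ℂ V, A.Invariant p → p = ⊥ ∨ p = ⊤

/-- A weight module: finite dimensional, a direct sum of `H`-eigenspaces, on which `K`
acts by `q^μ` on the `H`-eigenspace of eigenvalue `μ`. -/
structure IsWeight (r : ℕ) {V : Type} [AddCommGroup V] [Module ℂ V] (A : Ops V) : Prop where
  finDim : FiniteDimensional ℂ V
  sup_eigenspaces : (⨆ μ : ℂ, Module.End.eigenspace A.H μ) = ⊤
  K_apply : ∀ (μ : ℂ), ∀ v ∈ Module.End.eigenspace A.H μ, A.K v = qc r μ • v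

/-- A `Ū`-linear map. -/
def IsEquivariant (A : Ops V) (B : Ops W) (f : V →ₗ[ℂ] W) : Prop :=
  (∀ v, f (A.K v) = B.K (f v)) ∧ (∀ v, f (A.Kinv v) = B.Kinv (f v)) ∧
    (∀ v, f (A.H v) = B.H (f v)) ∧ (∀ v, f (A.E v) = B.E (f v)) ∧
    (∀ v, f (A.F v) = B.F (f v))

/-- Isomorphism of `Ū`-modules. -/
def OpsIso (A : Ops V) (B : Ops W) : Prop :=
  ∃ e : V ≃ₗ[ℂ] W, IsEquivariant A B (e : V →ₗ[ℂ] W)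

/-- The weight `α + r - 1 - 2i` of the basis vector `v_i` of the Verma module `V_α`. -/
def wt (r : ℕ) (α : ℂ) (i : ℕ) : ℂ := α + r - 1 - 2 * i

/-- The coefficient `{i}{i-α}/{1}²` occurring in `E v_i`. -/
def cE (r : ℕ) (α : ℂ) (i : ℕ) : ℂ := qbrk r i * qbrk r ((i : ℂ) - α) / qbrk r 1 ^ 2

/-- The Verma module `V_α` of highest weight `α + r - 1`, realized on `Fin r → ℂ`
with basis `v_0, …, v_{r-1}`. -/
def vermaOps (r : ℕ) (α : ℂ) : Ops (Fin r → ℂ) where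
  K := (Matrix.diagonal fun i : Fin r => qc r (wt r α (i : ℕ))).mulVecLin
  Kinv := (Matrix.diagonal fun i : Fin r => qc r (-wt r α (i : ℕ))).mulVecLin
  H := (Matrix.diagonal fun i : Fin r => wt r α (i : ℕ)).mulVecLin
  E := (Matrix.of fun i j : Fin r =>
    if (j : ℕ) = (i : ℕ) + 1 then cE r α (j : ℕ) else 0).mulVecLin
  F := (Matrix.of fun i j : Fin r =>
    if (i : ℕ) = (j : ℕ) + 1 then (1 : ℂ) else 0).mulVecLin

/-- `α_{l,n} = (l-1)r + n + 1`, so that `S_n^{lr}` is a quotient of `V_{α_{l,n}}`. -/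
def aln (r : ℕ) (l : ℤ) (n : ℕ) : ℂ := ((l : ℂ) - 1) * r + n + 1

/-- The simple module `S_n^{lr}` of highest weight `lr + n` and dimension `n+1`,
realized on `Fin (n+1) → ℂ`. -/
def smodOps (r : ℕ) (l : ℤ) (n : ℕ) : Ops (Fin (n + 1) → ℂ) where
  K := (Matrix.diagonal fun i : Fin (n + 1) => qc r (wt r (aln r l n) (i : ℕ))).mulVecLin
  Kinv := (Matrix.diagonal fun i : Fin (n + 1) => qc r (-wt r (aln r l n) (i : ℕ))).mulVecLin
  H := (Matrix.diagonal fun i : Fin (n + 1) => wt r (aln r l n) (i : ℕ)).mulVecLin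
  E := (Matrix.of fun i j : Fin (n + 1) =>
    if (j : ℕ) = (i : ℕ) + 1 then cE r (aln r l n) (j : ℕ) else 0).mulVecLin
  F := (Matrix.of fun i j : Fin (n + 1) =>
    if (i : ℕ) = (j : ℕ) + 1 then (1 : ℂ) else 0).mulVecLin

/-- `α ∈ (ℂ∖ℤ) ∪ rℤ`. -/
def goodα (r : ℕ) (α : ℂ) : Prop := (¬∃ n : ℤ, α = (n : ℂ)) ∨ ∃ m : ℤ, α = (r : ℂ) * m


lemma qc_eq (r : ℕ) (z : ℂ) : qc r z = Complex.exp ((Real.pi * Complex.I / r) * z) := by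
  unfold qc; ring_nf

lemma qc_add (r : ℕ) (x y : ℂ) : qc r (x + y) = qc r x * qc r y := by
  simp [qc_eq, mul_add, Complex.exp_add]

lemma qc_zero (r : ℕ) : qc r 0 = 1 := by simp [qc]

lemma qc_ne_zero (r : ℕ) (z : ℂ) : qc r z ≠ 0 := Complex.exp_ne_zero _

lemma qc_neg (r : ℕ) (z : ℂ) : qc r (-z) = (qc r z)⁻¹ := by
  simp [qc_eq, Complex.exp_neg]

lemma qc_r (r : ℕ) (hr : r ≠ 0) : qc r r = -1 := by
  rw [qc, mul_div_assoc, div_self (by exact_mod_cast hr), mul_one, Complex.exp_pi_mul_I]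

lemma qbrk_zero (r : ℕ) : qbrk r 0 = 0 := by simp [qbrk]

lemma qbrk_add_r (r : ℕ) (hr : r ≠ 0) (z : ℂ) : qbrk r (z + r) = -qbrk r z := by
  have h1 : qc r (z + r) = -qc r z := by rw [qc_add, qc_r r hr]; ring
  have h2 : qc r (-(z + r)) = -qc r (-z) := by
    rw [show -(z + (r:ℂ)) = -z + -(r:ℂ) by ring, qc_add, qc_neg r (r:ℂ), qc_r r hr]
    ring
  rw [qbrk, h1, h2, qbrk]; ring

lemma qbrk_eq_zero_iff (r : ℕ) (hr : r ≠ 0) (z : ℂ) :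
    qbrk r z = 0 ↔ ∃ k : ℤ, z = k * r := by
  have hπ : (Real.pi : ℂ) ≠ 0 := by exact_mod_cast Real.pi_ne_zero
  have hrc : (r : ℂ) ≠ 0 := by exact_mod_cast hr
  have hI := Complex.I_ne_zero
  rw [qbrk, sub_eq_zero, qc_eq, qc_eq, Complex.exp_eq_exp_iff_exists_int]
  constructor
  · rintro ⟨n, hn⟩
    refine ⟨n, ?_⟩
    field_simp at hn
    have h2 : (2 * Real.pi * Complex.I) * z = (2 * Real.pi * Complex.I) * ((n:ℂ) * r) := by
      linear_combination (Real.pi * Complex.I) * hn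
    exact mul_left_cancel₀ (by simp [hπ, hI] : (2:ℂ) * Real.pi * Complex.I ≠ 0) h2
  · rintro ⟨k, hk⟩
    refine ⟨k, ?_⟩
    subst hk
    field_simp
    ring

lemma qbrk_nat_ne_zero (r : ℕ) (hr : r ≠ 0) {m : ℕ} (h1 : 1 ≤ m) (h2 : m < r) :
    qbrk r m ≠ 0 := by
  intro h
  rw [qbrk_eq_zero_iff r hr] at h
  rcases h with ⟨k, hk⟩
  have : (m : ℂ) = ((k * r : ℤ) : ℂ) := by push_cast; exact hk
  have hm : (m : ℤ) = k * r := by exact_mod_cast this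
  rcases lt_trichotomy k 0 with h | h | h
  · nlinarith [hm, (by exact_mod_cast h1 : (1:ℤ) ≤ m), (by exact_mod_cast h2 : (m:ℤ) < r)]
  · simp [h] at hm; omega
  · nlinarith [hm, (by exact_mod_cast h2 : (m:ℤ) < r), (by omega : (1:ℤ) ≤ k)]

lemma qbrk_one_ne_zero (r : ℕ) (hr : 2 ≤ r) : qbrk r 1 ≠ 0 := by
  have := qbrk_nat_ne_zero r (by omega) (m := 1) le_rfl (by omega)
  simpa using this

lemma cE_rec (r : ℕ) (hr : r ≠ 0) (α : ℂ) (i : ℕ) :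
    qbrk r (i+1) * qbrk r ((i:ℂ)+1-α) = qbrk r i * qbrk r ((i:ℂ)-α)
      + qbrk r 1 * qbrk r (wt r α i) := by
  have hwt : qbrk r (wt r α i) = - qbrk r (α - 1 - 2*i) := by
    rw [show wt r α i = (α - 1 - 2*(i:ℂ)) + r by unfold wt; ring, qbrk_add_r r hr]
  rw [hwt]
  have ha := qc_ne_zero r α
  have hi := qc_ne_zero r i
  have h1 := qc_ne_zero r 1
  have e1 : qbrk r ((i:ℂ)+1) = qc r i * qc r 1 - (qc r i)⁻¹ * (qc r 1)⁻¹ := by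
    rw [qbrk, qc_add, show -((i:ℂ)+1) = -(i:ℂ) + -(1:ℂ) by ring, qc_add, qc_neg, qc_neg]
  have e2 : qbrk r ((i:ℂ)+1-α) = qc r i * qc r 1 * (qc r α)⁻¹
      - (qc r i)⁻¹ * (qc r 1)⁻¹ * qc r α := by
    rw [qbrk, show (i:ℂ)+1-α = (i:ℂ) + (1:ℂ) + -α by ring, qc_add, qc_add, qc_neg,
      show -((i:ℂ)+1+-α) = -(i:ℂ) + -(1:ℂ) + α by ring, qc_add, qc_add, qc_neg, qc_neg]
  have e3 : qbrk r ((i:ℂ)-α) = qc r i * (qc r α)⁻¹ - (qc r i)⁻¹ * qc r α := by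
    rw [qbrk, show (i:ℂ)-α = (i:ℂ) + -α by ring, qc_add, qc_neg,
      show -((i:ℂ)+-α) = -(i:ℂ) + α by ring, qc_add, qc_neg]
  have e4 : qbrk r (α - 1 - 2*i) = qc r α * (qc r 1)⁻¹ * ((qc r i)⁻¹)^2
      - (qc r α)⁻¹ * qc r 1 * (qc r i)^2 := by
    rw [qbrk, show α - 1 - 2*(i:ℂ) = α + -(1:ℂ) + -(i:ℂ) + -(i:ℂ) by ring,
      qc_add, qc_add, qc_add, qc_neg, qc_neg,
      show -(α + -(1:ℂ) + -(i:ℂ) + -(i:ℂ)) = -α + (1:ℂ) + (i:ℂ) + (i:ℂ) by ring,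
      qc_add, qc_add, qc_add, qc_neg]
    ring
  have e5 : qbrk r (i:ℂ) = qc r i - (qc r i)⁻¹ := by rw [qbrk, qc_neg]
  have e6 : qbrk r (1:ℂ) = qc r 1 - (qc r 1)⁻¹ := by rw [qbrk, qc_neg]
  rw [e1, e2, e3, e4, e5, e6]
  generalize qc r (i:ℂ) = u at hi ⊢
  generalize qc r (1:ℂ) = s at h1 ⊢
  generalize qc r α = a at ha ⊢
  field_simp
  ring_nf

lemma cE_zero (r : ℕ) (α : ℂ) : cE r α 0 = 0 := by
  simp [cE, qbrk_zero]

lemma cE_succ (r : ℕ) (hr : 2 ≤ r) (α : ℂ) (i : ℕ) :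
    cE r α (i+1) = cE r α i + qbrk r (wt r α i) / qbrk r 1 := by
  have h1 := qbrk_one_ne_zero r hr
  have hrec := cE_rec r (by omega) α i
  unfold cE
  push_cast
  rw [hrec]
  field_simp


/-- The common shape of `vermaOps` and `smodOps`. -/
def genOps (r d : ℕ) (α : ℂ) : Ops (Fin d → ℂ) where
  K := (Matrix.diagonal fun i : Fin d => qc r (wt r α (i : ℕ))).mulVecLin
  Kinv := (Matrix.diagonal fun i : Fin d => qc r (-wt r α (i : ℕ))).mulVecLin
  H := (Matrix.diagonal fun i : Fin d => wt r α (i : ℕ)).mulVecLin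
  E := (Matrix.of fun i j : Fin d =>
    if (j : ℕ) = (i : ℕ) + 1 then cE r α (j : ℕ) else 0).mulVecLin
  F := (Matrix.of fun i j : Fin d =>
    if (i : ℕ) = (j : ℕ) + 1 then (1 : ℂ) else 0).mulVecLin

lemma vermaOps_eq (r : ℕ) (α : ℂ) : vermaOps r α = genOps r r α := rfl

lemma smodOps_eq (r : ℕ) (l : ℤ) (n : ℕ) : smodOps r l n = genOps r (n+1) (aln r l n) := rfl

lemma opsIso_symm {A : Ops V} {B : Ops W} (h : OpsIso A B) : OpsIso B A := by
  obtain ⟨e, h1, h2, h3, h4, h5⟩ := h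
  simp only [LinearEquiv.coe_coe] at h1 h2 h3 h4 h5
  have comp : ∀ (TA : Module.End ℂ V) (TB : Module.End ℂ W),
      (∀ v, e (TA v) = TB (e v)) → ∀ v, e.symm (TB v) = TA (e.symm v) := by
    intro TA TB h v
    apply e.injective
    rw [e.apply_symm_apply, h, e.apply_symm_apply]
  exact ⟨e.symm, comp _ _ h1, comp _ _ h2, comp _ _ h3, comp _ _ h4, comp _ _ h5⟩

lemma opsIso_trans {A : Ops V} {B : Ops W} {C : Ops U} (h : OpsIso A B) (h' : OpsIso B C) :
    OpsIso A C := by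
  obtain ⟨e, h1, h2, h3, h4, h5⟩ := h
  obtain ⟨f, g1, g2, g3, g4, g5⟩ := h'
  simp only [LinearEquiv.coe_coe] at h1 h2 h3 h4 h5 g1 g2 g3 g4 g5
  refine ⟨e.trans f, ?_, ?_, ?_, ?_, ?_⟩ <;> intro v <;>
    simp only [LinearEquiv.coe_coe, LinearEquiv.trans_apply]
  · rw [h1, g1]
  · rw [h2, g2]
  · rw [h3, g3]
  · rw [h4, g4]
  · rw [h5, g5]

lemma opsIso_finrank {A : Ops V} {B : Ops W} (h : OpsIso A B) :
    Module.finrank ℂ V = Module.finrank ℂ W := by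
  obtain ⟨e, -⟩ := h
  exact e.finrank_eq

lemma map_span_le (T : Module.End ℂ V) (s : Set V)
    (h : ∀ v ∈ s, T v ∈ Submodule.span ℂ s) :
    ∀ v ∈ Submodule.span ℂ s, T v ∈ Submodule.span ℂ s := by
  intro v hv
  induction hv using Submodule.span_induction with
  | mem x hx => exact h x hx
  | zero => simp
  | add x y _ _ hx hy => rw [map_add]; exact add_mem hx hy
  | smul c x _ hx => rw [map_smul]; exact Submodule.smul_mem _ _ hx

/-- transfer of diagonal eigenvalues through an intertwining equivalence -/
lemma diag_spec {d d' : ℕ} (D : Fin d → ℂ) (D' : Fin d' → ℂ)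
    (e : (Fin d → ℂ) ≃ₗ[ℂ] (Fin d' → ℂ))
    (he : ∀ v, e ((Matrix.diagonal D).mulVecLin v) = (Matrix.diagonal D').mulVecLin (e v))
    (i : Fin d) : ∃ j : Fin d', D' j = D i := by
  classical
  set u : Fin d → ℂ := Pi.single i 1 with hu
  have hv : (Matrix.diagonal D).mulVecLin u = D i • u := by
    rw [Matrix.mulVecLin_apply, hu, Matrix.diagonal_mulVec_single]
    funext k
    by_cases hk : i = k
    · subst hk; simp
    · simp [Pi.single_apply, hk, Ne.symm hk]
  have h2 := he u
  rw [hv, map_smul] at h2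
  have hev : e u ≠ 0 := by
    intro h0
    have h00 : u = 0 := by
      apply e.injective; simpa using h0
    have := congrFun h00 i
    simp [hu] at this
  obtain ⟨j, hj⟩ : ∃ j, e u j ≠ 0 := by
    by_contra hcon
    push_neg at hcon
    exact hev (funext hcon)
  refine ⟨j, ?_⟩
  symm
  have h3 := congrFun h2 j
  rw [Matrix.mulVecLin_apply, Matrix.mulVec_diagonal] at h3
  rw [Pi.smul_apply, smul_eq_mul] at h3
  exact mul_right_cancel₀ hj h3

/-- two isomorphic genOps have weights in common. -/
lemma genOps_spec {r d d' : ℕ} {α β : ℂ}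
    (h : OpsIso (genOps r d α) (genOps r d' β)) (i : Fin d) :
    ∃ j : Fin d', wt r β (j : ℕ) = wt r α (i : ℕ) := by
  obtain ⟨e, h1, h2, h3, h4, h5⟩ := h
  simp only [LinearEquiv.coe_coe] at h3
  exact diag_spec _ _ e h3 i

/-- main construction: a module with a weight-string basis is isomorphic to `genOps`. -/
lemma build_iso (r d : ℕ) (hr : 2 ≤ r)
    (ρ : Rep r V) (α : ℂ) (w : ℕ → V)
    (hH : ∀ i, ρ.H (w i) = wt r α i • w i)
    (hK : ∀ i, ρ.K (w i) = qc r (wt r α i) • w i)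
    (hKinv : ∀ i, ρ.Kinv (w i) = qc r (-wt r α i) • w i)
    (hE : ∀ i, ρ.E (w (i+1)) = cE r α (i+1) • w i)
    (hE0 : ρ.E (w 0) = 0)
    (hF : ∀ i, ρ.F (w i) = w (i+1))
    (hwd : w d = 0)
    (b : Module.Basis (Fin d) ℂ V) (hb : ∀ i : Fin d, b i = w (i : ℕ)) :
    OpsIso ρ.toOps (genOps r d α) := by
  classical
  set e := b.equivFun with he
  have hsingle : ∀ j : Fin d, e (b j) = Pi.single j 1 := by
    intro j
    funext k
    rw [he]
    rw [Module.Basis.equivFun_self]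
    rw [Pi.single_apply]
    by_cases h : j = k
    · simp [h]
    · simp [h, Ne.symm h]
  have key : ∀ (T : Module.End ℂ V) (T' : Module.End ℂ (Fin d → ℂ)),
      (∀ j : Fin d, e (T (b j)) = T' (e (b j))) →
      ∀ v, e (T v) = T' (e v) := by
    intro T T' h v
    have heq : (e.toLinearMap.comp T) = (T'.comp e.toLinearMap) := by
      apply b.ext
      intro j
      simpa using h j
    have := congrFun (congrArg DFunLike.coe heq) v
    simpa using this
  refine ⟨e, ?_, ?_, ?_, ?_, ?_⟩ <;>
    simp only [LinearEquiv.coe_coe]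
  -- K
  · apply key
    intro j
    rw [hb j, hK, map_smul, ← hb j, hsingle]
    show _ = (genOps r d α).K _
    rw [genOps]
    rw [Matrix.mulVecLin_apply, Matrix.diagonal_mulVec_single]
    funext k
    rw [Pi.smul_apply, Pi.single_apply, Pi.single_apply]
    by_cases h : j = k <;> simp [h]
  -- Kinv
  · apply key
    intro j
    rw [hb j, hKinv, map_smul, ← hb j, hsingle]
    show _ = (genOps r d α).Kinv _
    rw [genOps]
    rw [Matrix.mulVecLin_apply, Matrix.diagonal_mulVec_single]
    funext k
    rw [Pi.smul_apply, Pi.single_apply, Pi.single_apply]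
    by_cases h : j = k <;> simp [h]
  -- H
  · apply key
    intro j
    rw [hb j, hH, map_smul, ← hb j, hsingle]
    show _ = (genOps r d α).H _
    rw [genOps]
    rw [Matrix.mulVecLin_apply, Matrix.diagonal_mulVec_single]
    funext k
    rw [Pi.smul_apply, Pi.single_apply, Pi.single_apply]
    by_cases h : j = k <;> simp [h]
  -- E
  · apply key
    intro j
    rw [hb j]
    have hs2 : e (w (j:ℕ)) = Pi.single j 1 := by rw [← hb j]; exact hsingle j
    rw [hs2]
    show e (ρ.E (w (j:ℕ))) = (genOps r d α).E (Pi.single j 1)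
    rw [genOps]
    rw [Matrix.mulVecLin_apply, Matrix.mulVec_single_one]
    rcases Nat.eq_zero_or_pos (j : ℕ) with hj | hj
    · rw [hj, hE0, map_zero]
      funext k
      simp only [Matrix.col_apply, Matrix.of_apply, Pi.zero_apply]
      rw [if_neg (show ¬ (j:ℕ) = (k:ℕ)+1 by omega)]
    · obtain ⟨p, hp⟩ : ∃ p, (j : ℕ) = p + 1 := ⟨(j:ℕ) - 1, by omega⟩
      rw [hp, hE p, map_smul]
      have hpd : p < d := by have := j.isLt; omega
      have hwp : w p = b ⟨p, hpd⟩ := (hb ⟨p, hpd⟩).symm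
      rw [hwp, hsingle]
      funext k
      rw [Pi.smul_apply, Pi.single_apply]
      simp only [Matrix.col_apply, Matrix.of_apply, smul_eq_mul, mul_one]
      by_cases hk : (j:ℕ) = (k:ℕ) + 1
      · have hkp : k = ⟨p, hpd⟩ := Fin.ext (by simp only [Fin.val_mk]; omega)
        rw [if_pos hkp, if_pos hk, hp, mul_one]
      · have hkp : ¬ k = ⟨p, hpd⟩ := by
          intro hc
          apply hk
          have : (k:ℕ) = p := by rw [hc]
          omega
        rw [if_neg hkp, if_neg hk, mul_zero]
  -- F
  · apply key
    intro j
    rw [hb j]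
    have hs2 : e (w (j:ℕ)) = Pi.single j 1 := by rw [← hb j]; exact hsingle j
    rw [hs2]
    show e (ρ.F (w (j:ℕ))) = (genOps r d α).F (Pi.single j 1)
    rw [genOps]
    rw [Matrix.mulVecLin_apply, Matrix.mulVec_single_one]
    rw [hF]
    by_cases hj : (j : ℕ) + 1 < d
    · have hwp : w ((j:ℕ)+1) = b ⟨(j:ℕ)+1, hj⟩ := (hb ⟨(j:ℕ)+1, hj⟩).symm
      rw [hwp, hsingle]
      funext k
      rw [Pi.single_apply]
      simp only [Matrix.col_apply, Matrix.of_apply, mul_one]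
      by_cases hk : (k:ℕ) = (j:ℕ) + 1
      · have hkp : k = ⟨(j:ℕ)+1, hj⟩ := Fin.ext (by simp only [Fin.val_mk]; omega)
        rw [if_pos hkp, if_pos hk]
      · have hkp : ¬ k = ⟨(j:ℕ)+1, hj⟩ := by
          intro hc
          apply hk
          rw [hc]
        rw [if_neg hkp, if_neg hk]
    · have hjd : (j : ℕ) + 1 = d := by have := j.isLt; omega
      rw [hjd, hwd, map_zero]
      funext k
      simp only [Matrix.col_apply, Matrix.of_apply, Pi.zero_apply]
      rw [if_neg (by have := k.isLt; omega : ¬ (k:ℕ) = (j:ℕ)+1)]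

lemma rep_H_E {r : ℕ} (ρ : Rep r V) (x : V) (μ : ℂ) (hx : ρ.H x = μ • x) :
    ρ.H (ρ.E x) = (μ + 2) • ρ.E x := by
  have h := congrFun (congrArg DFunLike.coe ρ.rel_HE) x
  simp only [LinearMap.sub_apply, Module.End.mul_apply, LinearMap.smul_apply] at h
  rw [hx, map_smul] at h
  have h2 := eq_add_of_sub_eq h
  rw [h2, add_smul]
  abel

lemma rep_H_F {r : ℕ} (ρ : Rep r V) (x : V) (μ : ℂ) (hx : ρ.H x = μ • x) :
    ρ.H (ρ.F x) = (μ - 2) • ρ.F x := by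
  have h := congrFun (congrArg DFunLike.coe ρ.rel_HF) x
  simp only [LinearMap.sub_apply, Module.End.mul_apply, LinearMap.smul_apply] at h
  rw [hx, map_smul] at h
  have h2 := eq_add_of_sub_eq h
  rw [h2, sub_smul]
  rw [neg_smul, sub_eq_add_neg]
  abel

lemma rep_Kinv {r : ℕ} (ρ : Rep r V) (x : V) (c : ℂ) (hc : c ≠ 0) (hx : ρ.K x = c • x) :
    ρ.Kinv x = c⁻¹ • x := by
  have h := congrFun (congrArg DFunLike.coe ρ.rel_KinvK) x
  simp only [Module.End.mul_apply, Module.End.one_apply] at h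
  rw [hx, map_smul] at h
  have h3 : c⁻¹ • (c • ρ.Kinv x) = c⁻¹ • x := congrArg _ h
  rw [smul_smul, inv_mul_cancel₀ hc, one_smul] at h3
  exact h3

lemma rep_EF {r : ℕ} (ρ : Rep r V) (x : V) :
    ρ.E (ρ.F x) = ρ.F (ρ.E x) + (qbrk r 1)⁻¹ • (ρ.K x - ρ.Kinv x) := by
  have h := congrFun (congrArg DFunLike.coe ρ.rel_EF) x
  simp only [LinearMap.sub_apply, Module.End.mul_apply, LinearMap.smul_apply] at h
  have h2 := eq_add_of_sub_eq h
  rw [h2]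
  abel

lemma genOps_iso_wt_eq {r d d' : ℕ} (hd : 0 < d) (hd' : 0 < d') {α β : ℂ}
    (h : OpsIso (genOps r d α) (genOps r d' β)) : α = β := by
  obtain ⟨j, hj⟩ := genOps_spec h ⟨0, hd⟩
  obtain ⟨j', hj'⟩ := genOps_spec (opsIso_symm h) ⟨0, hd'⟩
  have e0 : ((⟨0, hd⟩ : Fin d) : ℕ) = 0 := rfl
  have e0' : ((⟨0, hd'⟩ : Fin d') : ℕ) = 0 := rfl
  rw [e0] at hj
  rw [e0'] at hj'
  unfold wt at hj hj'
  push_cast at hj hj'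
  have hsum : ((j:ℕ):ℂ) + ((j':ℕ):ℂ) = 0 := by
    linear_combination (-(1:ℂ)/2) * hj + (-(1:ℂ)/2) * hj'
  have hnat : ((j:ℕ) + (j':ℕ)) = 0 := by exact_mod_cast hsum
  have hj0 : ((j:ℕ):ℂ) = 0 := by
    have h00 : (j:ℕ) = 0 := by omega
    rw [h00]; simp
  linear_combination -hj - 2 * hj0

/-- Every simple weight `Ū`-module is isomorphic to exactly one module from the list:
`V_α` with `α ∈ (ℂ∖ℤ) ∪ rℤ`, or `S_n^{lr}` with `l ∈ ℤ` and `0 ≤ n ≤ r-2`. -/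

theorem stmt5 (r : ℕ) (hr : 2 ≤ r) (ρ : Rep r V)
    (hw : IsWeight r ρ.toOps) (hs : ρ.toOps.IsSimple) :
    ((∃! α : ℂ, goodα r α ∧ OpsIso ρ.toOps (vermaOps r α)) ∧
      ¬∃ (l : ℤ) (n : ℕ), n ≤ r - 2 ∧ OpsIso ρ.toOps (smodOps r l n)) ∨
    ((¬∃ α : ℂ, goodα r α ∧ OpsIso ρ.toOps (vermaOps r α)) ∧
      ∃! p : ℤ × ℕ, p.2 ≤ r - 2 ∧ OpsIso ρ.toOps (smodOps r p.1 p.2)) := by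
  classical
  have hr0 : r ≠ 0 := by omega
  -- Step 1: a nonzero H-eigenvector exists
  obtain ⟨v1, hv1⟩ := hs.1
  have hex : ∃ (μ : ℂ) (v : V), v ≠ 0 ∧ ρ.H v = μ • v := by
    by_contra hcon
    push_neg at hcon
    have hbot : ∀ μ : ℂ, Module.End.eigenspace ρ.H μ = ⊥ := by
      intro μ
      rw [Submodule.eq_bot_iff]
      intro x hx
      by_contra hx0
      exact (hcon μ x hx0) (Module.End.mem_eigenspace_iff.1 hx)
    have htop : (⊤ : Submodule ℂ V) = ⊥ := by
      rw [← hw.sup_eigenspaces]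
      simp [hbot]
    have hv10 : v1 = 0 := by
      have h := Submodule.mem_top (R := ℂ) (x := v1)
      rw [htop] at h
      simpa using h
    exact hv1 hv10
  obtain ⟨μ1, v, hv0, hvH⟩ := hex
  -- Step 2: highest weight vector
  have hPr : (ρ.E ^ r) v = 0 := by rw [ρ.rel_Er]; rfl
  have hexE : ∃ j, (ρ.E ^ j) v = 0 := ⟨r, hPr⟩
  have hj0pos : Nat.find hexE ≠ 0 := by
    intro h0
    have := Nat.find_spec hexE
    rw [h0] at this
    simp at this
    exact hv0 this
  set k := Nat.find hexE - 1 with hkdef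
  have hkne : (ρ.E ^ k) v ≠ 0 := Nat.find_min hexE (by omega)
  set v₀ := (ρ.E ^ k) v with hv₀def
  have hv₀ : v₀ ≠ 0 := hkne
  have hEv₀ : ρ.E v₀ = 0 := by
    have h1 : ρ.E ((ρ.E ^ k) v) = (ρ.E ^ (k + 1)) v := by
      rw [pow_succ', Module.End.mul_apply]
    rw [hv₀def, h1, show k + 1 = Nat.find hexE by omega]
    exact Nat.find_spec hexE
  have hgen : ∀ j : ℕ, ρ.H ((ρ.E ^ j) v) = (μ1 + 2 * (j:ℂ)) • (ρ.E ^ j) v := by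
    intro j
    induction j with
    | zero => simpa using hvH
    | succ p ih =>
      have h1 : (ρ.E ^ (p+1)) v = ρ.E ((ρ.E ^ p) v) := by
        rw [pow_succ', Module.End.mul_apply]
      rw [h1, rep_H_E ρ _ _ ih]
      push_cast
      ring_nf
  set μ₀ := μ1 + 2 * (k : ℂ) with hμ₀def
  have hHv₀ : ρ.H v₀ = μ₀ • v₀ := hgen k
  set α := μ₀ - r + 1 with hαdef
  have hwt0 : wt r α 0 = μ₀ := by rw [hαdef]; unfold wt; push_cast; ring
  have hwtsucc : ∀ i : ℕ, wt r α (i+1) = wt r α i - 2 := by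
    intro i; unfold wt; push_cast; ring
  -- Step 3: the string w i = F^i v₀
  set w : ℕ → V := fun i => (ρ.F ^ i) v₀ with hwdef
  have hw0 : w 0 = v₀ := by rw [hwdef]; simp
  have hwF : ∀ i, ρ.F (w i) = w (i+1) := by
    intro i
    rw [hwdef]
    simp only
    rw [pow_succ', Module.End.mul_apply]
  have hwH : ∀ i, ρ.H (w i) = wt r α i • w i := by
    intro i
    induction i with
    | zero => rw [hw0, hwt0]; exact hHv₀
    | succ p ih =>
      rw [← hwF p, rep_H_F ρ _ _ ih, hwtsucc]
  have hwK : ∀ i, ρ.K (w i) = qc r (wt r α i) • w i :=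
    fun i => hw.K_apply _ _ (Module.End.mem_eigenspace_iff.2 (hwH i))
  have hwKinv : ∀ i, ρ.Kinv (w i) = qc r (-wt r α i) • w i := by
    intro i
    rw [qc_neg]
    exact rep_Kinv ρ _ _ (qc_ne_zero _ _) (hwK i)
  have hE0 : ρ.E (w 0) = 0 := by rw [hw0]; exact hEv₀
  have hwE : ∀ i, ρ.E (w (i+1)) = cE r α (i+1) • w i := by
    intro i
    induction i with
    | zero =>
      rw [← hwF 0, rep_EF, hE0, map_zero, zero_add, hwK 0, hwKinv 0,
        cE_succ r hr α 0, cE_zero, zero_add, ← sub_smul, smul_smul]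
      congr 1
      rw [div_eq_inv_mul]
      rfl
    | succ p ih =>
      rw [← hwF (p+1), rep_EF, ih, map_smul, hwF p, hwK (p+1), hwKinv (p+1),
        cE_succ r hr α (p+1), ← sub_smul, smul_smul, ← add_smul]
      congr 1
      rw [div_eq_inv_mul]
      rfl
  have hwr : w r = 0 := by rw [hwdef]; simp only; rw [ρ.rel_Fr]; rfl
  -- Step 4: minimal vanishing index m
  have hex0 : ∃ i, w i = 0 := ⟨r, hwr⟩
  set m := Nat.find hex0 with hmdef
  have hm : w m = 0 := Nat.find_spec hex0
  have hmle : m ≤ r := Nat.find_le hwr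
  have hne : ∀ i, i < m → w i ≠ 0 := fun i hi => Nat.find_min hex0 hi
  have hmpos : 0 < m := by
    rcases Nat.eq_zero_or_pos m with h0 | h
    · exfalso
      apply hv₀
      rw [← hw0]
      have := hm
      rw [h0] at this
      exact this
    · exact h
  have hzero : ∀ i, m ≤ i → w i = 0 := by
    intro i
    induction i with
    | zero =>
      intro h0
      have hm0 : m = 0 := by omega
      have := hm
      rw [hm0] at this
      exact this
    | succ p ih =>
      intro hp
      rcases Nat.lt_or_ge p m with h | h
      · have : m = p + 1 := by omega
        rw [← this]; exact hm
      · rw [← hwF p, ih h, map_zero]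
  -- Step 5: basis
  have hinj : Function.Injective (fun i : Fin m => wt r α (i : ℕ)) := by
    intro i j hij
    simp only at hij
    unfold wt at hij
    have h2 : ((i : ℕ) : ℂ) = ((j : ℕ) : ℂ) := by linear_combination (-(1:ℂ)/2) * hij
    exact Fin.ext (by exact_mod_cast h2)
  have hli : LinearIndependent ℂ (fun i : Fin m => w (i : ℕ)) :=
    ρ.H.eigenvectors_linearIndependent' (fun i : Fin m => wt r α (i : ℕ)) hinj _
      (fun i => ⟨Module.End.mem_eigenspace_iff.2 (hwH i), hne i i.isLt⟩)
  set S := Submodule.span ℂ (Set.range fun i : Fin m => w (i : ℕ)) with hS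
  have hmemS : ∀ i : ℕ, w i ∈ S := by
    intro i
    by_cases hi : i < m
    · exact Submodule.subset_span ⟨⟨i, hi⟩, rfl⟩
    · rw [hzero i (by omega)]; exact zero_mem _
  have hInv : ρ.toOps.Invariant S := by
    refine ⟨?_, ?_, ?_, ?_, ?_⟩
    · apply map_span_le
      rintro x ⟨i, rfl⟩
      rw [show ρ.toOps.K = ρ.K from rfl, hwK]
      exact Submodule.smul_mem _ _ (hmemS _)
    · apply map_span_le
      rintro x ⟨i, rfl⟩
      rw [show ρ.toOps.Kinv = ρ.Kinv from rfl, hwKinv]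
      exact Submodule.smul_mem _ _ (hmemS _)
    · apply map_span_le
      rintro x ⟨i, rfl⟩
      rw [show ρ.toOps.H = ρ.H from rfl, hwH]
      exact Submodule.smul_mem _ _ (hmemS _)
    · apply map_span_le
      rintro x ⟨i, rfl⟩
      show ρ.E (w (i : ℕ)) ∈ Submodule.span ℂ (Set.range fun i : Fin m => w (i : ℕ))
      rcases Nat.eq_zero_or_pos (i : ℕ) with h0 | hpos
      · rw [h0, hE0]; exact zero_mem _
      · obtain ⟨p, hp⟩ : ∃ p, (i : ℕ) = p + 1 := ⟨(i : ℕ) - 1, by omega⟩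
        rw [hp, hwE p]
        exact Submodule.smul_mem _ _ (hmemS _)
    · apply map_span_le
      rintro x ⟨i, rfl⟩
      rw [show ρ.toOps.F = ρ.F from rfl, hwF]
      exact hmemS _
  have hStop : S = ⊤ := by
    rcases hs.2 S hInv with h | h
    · exfalso
      apply hv₀
      have h0 := hmemS 0
      rw [h] at h0
      rw [← hw0]
      simpa using h0
    · exact h
  set b : Module.Basis (Fin m) ℂ V := Module.Basis.mk hli (le_of_eq hStop.symm) with hbdef
  have hb : ∀ i : Fin m, b i = w (i : ℕ) := fun i => by rw [hbdef, Module.Basis.mk_apply]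
  have hiso : OpsIso ρ.toOps (genOps r m α) :=
    build_iso r m hr ρ α w hwH hwK hwKinv hwE hE0 hwF hm b hb
  have hfr : Module.finrank ℂ V = m :=
    (Module.finrank_eq_card_basis b).trans (by simp)
  have hfrpi : ∀ d : ℕ, Module.finrank ℂ (Fin d → ℂ) = d := by
    intro d
    simp [Module.finrank_pi]
  rcases eq_or_lt_of_le hmle with hmr | hmr
  · -- the Verma case : m = r
    clear_value m
    rw [hmr] at hiso
    have hisoV : OpsIso ρ.toOps (vermaOps r α) := by rw [vermaOps_eq]; exact hiso
    have hgood : goodα r α := by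
      by_contra hng
      rw [goodα] at hng
      push_neg at hng
      obtain ⟨⟨a, ha⟩, hnr⟩ := hng
      have h0le : (0:ℤ) ≤ a % (r:ℤ) := Int.emod_nonneg a (by exact_mod_cast hr0)
      have hltz : a % (r:ℤ) < (r:ℤ) := Int.emod_lt_of_pos a (by exact_mod_cast Nat.pos_of_ne_zero hr0)
      set c : ℕ := (a % (r:ℤ)).toNat with hcdef
      have hcz : (c:ℤ) = a % (r:ℤ) := Int.toNat_of_nonneg h0le
      have hdiv : (r:ℤ) * (a / (r:ℤ)) + a % (r:ℤ) = a := Int.mul_ediv_add_emod a (r:ℤ)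
      have hc0 : c ≠ 0 := by
        intro h0
        apply hnr (a / (r:ℤ))
        have he0 : a % (r:ℤ) = 0 := by omega
        have hza : a = (r:ℤ) * (a / (r:ℤ)) := by
          conv_lhs => rw [← hdiv]
          rw [he0, add_zero]
        rw [ha]
        exact_mod_cast congrArg (Int.cast : ℤ → ℂ) hza
      have hc1 : 1 ≤ c := by omega
      have hcr : c < r := by omega
      have hqbc : qbrk r ((c:ℂ) - α) = 0 := by
        rw [qbrk_eq_zero_iff r hr0]
        refine ⟨-(a / (r:ℤ)), ?_⟩
        rw [ha]
        have hz : (c:ℤ) - a = (-(a / (r:ℤ))) * (r:ℤ) := by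
          rw [hcz]
          linear_combination hdiv
        exact_mod_cast congrArg (Int.cast : ℤ → ℂ) hz
      have hcEc : cE r α c = 0 := by unfold cE; rw [hqbc, mul_zero, zero_div]
      set t : Set (Fin m) := {i : Fin m | c ≤ (i:ℕ)} with htdef
      set S2 := Submodule.span ℂ ((fun i : Fin m => w (i:ℕ)) '' t) with hS2
      have hmem2 : ∀ i : ℕ, c ≤ i → w i ∈ S2 := by
        intro i hi
        by_cases him : i < m
        · exact Submodule.subset_span ⟨⟨i, him⟩, hi, rfl⟩
        · rw [hzero i (by omega)]; exact zero_mem _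
      have hInv2 : ρ.toOps.Invariant S2 := by
        refine ⟨?_, ?_, ?_, ?_, ?_⟩
        · apply map_span_le
          rintro x ⟨i, hit, rfl⟩
          show ρ.K (w (i:ℕ)) ∈ Submodule.span ℂ ((fun i : Fin m => w (i:ℕ)) '' t)
          rw [hwK]
          exact Submodule.smul_mem _ _ (hmem2 _ hit)
        · apply map_span_le
          rintro x ⟨i, hit, rfl⟩
          show ρ.Kinv (w (i:ℕ)) ∈ Submodule.span ℂ ((fun i : Fin m => w (i:ℕ)) '' t)
          rw [hwKinv]
          exact Submodule.smul_mem _ _ (hmem2 _ hit)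
        · apply map_span_le
          rintro x ⟨i, hit, rfl⟩
          show ρ.H (w (i:ℕ)) ∈ Submodule.span ℂ ((fun i : Fin m => w (i:ℕ)) '' t)
          rw [hwH]
          exact Submodule.smul_mem _ _ (hmem2 _ hit)
        · apply map_span_le
          rintro x ⟨i, hit, rfl⟩
          show ρ.E (w (i:ℕ)) ∈ Submodule.span ℂ ((fun i : Fin m => w (i:ℕ)) '' t)
          have hit' : c ≤ (i:ℕ) := hit
          obtain ⟨p, hp⟩ : ∃ p, (i:ℕ) = p + 1 := ⟨(i:ℕ)-1, by omega⟩
          rw [hp, hwE p]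
          by_cases hic : (i:ℕ) = c
          · rw [show p + 1 = c by omega, hcEc, zero_smul]
            exact zero_mem _
          · exact Submodule.smul_mem _ _ (hmem2 p (by omega))
        · apply map_span_le
          rintro x ⟨i, hit, rfl⟩
          show ρ.F (w (i:ℕ)) ∈ Submodule.span ℂ ((fun i : Fin m => w (i:ℕ)) '' t)
          have hit' : c ≤ (i:ℕ) := hit
          rw [hwF]
          exact hmem2 _ (by omega)
      rcases hs.2 S2 hInv2 with hbot2 | htop2
      · have hwc : w c ∈ S2 := hmem2 c le_rfl
        rw [hbot2] at hwc
        exact hne c (by omega) (by simpa using hwc)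
      · have h0t : (⟨0, hmpos⟩ : Fin m) ∉ t := by
          intro hmem
          simp only [htdef, Set.mem_setOf_eq] at hmem
          omega
        have hnm := hli.notMem_span_image (s := t) h0t
        apply hnm
        have hw0mem : w 0 ∈ S2 := htop2 ▸ Submodule.mem_top
        exact hw0mem
    refine Or.inl ⟨⟨α, ⟨hgood, hisoV⟩, ?_⟩, ?_⟩
    · rintro β ⟨hgβ, hisoβ⟩
      have h12 : OpsIso (genOps r r β) (genOps r r α) := by
        rw [← vermaOps_eq, ← vermaOps_eq]
        exact opsIso_trans (opsIso_symm hisoβ) hisoV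
      exact genOps_iso_wt_eq (by omega) (by omega) h12
    · rintro ⟨l, n, hn, hisoS⟩
      have hfr2 := opsIso_finrank hisoS
      rw [hfr, hfrpi] at hfr2
      omega
  · -- the S_n^{lr} case : m < r
    have hm1 : ρ.E (w m) = cE r α m • w (m-1) := by
      have h := hwE (m-1)
      rw [show m - 1 + 1 = m by omega] at h
      exact h
    rw [hm, map_zero] at hm1
    have hcEm : cE r α m = 0 := by
      rcases smul_eq_zero.1 hm1.symm with h | h
      · exact h
      · exact absurd h (hne (m-1) (by omega))
    have hqb : qbrk r ((m:ℂ) - α) = 0 := by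
      unfold cE at hcEm
      have hq1 := qbrk_one_ne_zero r hr
      have h2 : qbrk r (m:ℂ) * qbrk r ((m:ℂ) - α) = 0 := by
        field_simp at hcEm
        exact hcEm.trans (mul_zero _)
      rcases mul_eq_zero.1 h2 with h | h
      · exact absurd h (qbrk_nat_ne_zero r hr0 (by omega) (by omega))
      · exact h
    obtain ⟨kk, hkk⟩ := (qbrk_eq_zero_iff r hr0 _).1 hqb
    set l : ℤ := 1 - kk with hldef
    set n : ℕ := m - 1 with hndef
    have hn1 : n + 1 = m := by omega
    have hα : α = aln r l n := by
      unfold aln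
      have hcast : ((n:ℕ):ℂ) = (m:ℂ) - 1 := by
        rw [hndef]
        push_cast [Nat.cast_sub (by omega : 1 ≤ m)]
        ring
      rw [hcast, hldef]
      push_cast
      linear_combination -hkk
    have hisoS : OpsIso ρ.toOps (smodOps r l n) := by
      rw [smodOps_eq, hn1, ← hα]
      exact hiso
    refine Or.inr ⟨?_, ⟨(l, n), ⟨by omega, hisoS⟩, ?_⟩⟩
    · rintro ⟨β, hgβ, hisoV⟩
      have hfr2 := opsIso_finrank hisoV
      rw [hfr, hfrpi] at hfr2
      omega
    · rintro ⟨l', n'⟩ ⟨hn', hisoS'⟩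
      have hfr2 := opsIso_finrank hisoS'
      rw [hfr, hfrpi] at hfr2
      have hnn : n' = n := by omega
      subst hnn
      have h12 : OpsIso (genOps r (n+1) (aln r l' n)) (genOps r (n+1) (aln r l n)) := by
        rw [← smodOps_eq, ← smodOps_eq]
        exact opsIso_trans (opsIso_symm hisoS') hisoS
      have haln : aln r l' n = aln r l n := genOps_iso_wt_eq (by omega) (by omega) h12
      have hll : l' = l := by
        unfold aln at haln
        have hcl : (l':ℂ) * r = (l:ℂ) * r := by linear_combination haln
        have hrc : (r:ℂ) ≠ 0 := by exact_mod_cast hr0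
        have hc2 : (l':ℂ) = l := mul_right_cancel₀ hrc hcl
        exact_mod_cast hc2
      simp [hll]


end Unrolled
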